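/- Quadratic inequality for homogeneous symbols (Euclidean form of the key lemma): Let K₀ ⊂ ℝⁿ be a nonempty compact set, let s > 0, and let σ : K₀ × (ℝⁿ∖{0}) → ℂ^{I×J} be continuous and positively homogeneous of degree s in the second variable (σ(x,tξ) = t^s σ(x,ξ) for t > 0). Let Q : K₀ → (sesquilinear forms on ℂ^J) be continuous, and set Λ(x) := { v ∈ ℂ^J : σ(x,ξ)v = 0 for some ξ ∈ ℝⁿ∖{0} }. Assume Re Q_x(v,v) ≥ 0 for every x ∈ K₀ and every v ∈ Λ(x). Then for every δ > 0 there exists C > 0 such that for all x ∈ K₀, all ξ ∈ ℝⁿ with |ξ| ≥ 1, and all v ∈ ℂ^J: Re Q_x(v,v) ≥ −δ |v|² − C (1+|ξ|²)^{-s} |σ(x,ξ)v|². -/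

import Mathlib

noncomputable section

variable {n I J : ℕ}

/-- Application of a matrix `A ∈ ℂ^{I×J}` to a vector `v ∈ ℂᴶ`, valued in Hermitian `ℂᴵ`. -/
def matVec (A : Fin I → Fin J → ℂ) (v : EuclideanSpace ℂ (Fin J)) : EuclideanSpace ℂ (Fin I) :=
  (WithLp.equiv 2 (Fin I → ℂ)).symm fun i => ∑ j, A i j * v j

lemma matVec_smul (A : Fin I → Fin J → ℂ) (c : ℂ) (v : EuclideanSpace ℂ (Fin J)) :
    matVec A (c • v) = c • matVec A v := by
  ext i
  simp only [matVec, WithLp.equiv_symm_apply, PiLp.toLp_apply, PiLp.smul_apply, smul_eq_mul, Finset.mul_sum]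
  exact Finset.sum_congr rfl fun j _ => by ring

lemma matVec_entries_smul (a : ℂ) (A : Fin I → Fin J → ℂ) (v : EuclideanSpace ℂ (Fin J)) :
    matVec (fun i j => a * A i j) v = a • matVec A v := by
  ext i
  simp only [matVec, WithLp.equiv_symm_apply, PiLp.toLp_apply, PiLp.smul_apply, smul_eq_mul, Finset.mul_sum]
  exact Finset.sum_congr rfl fun j _ => by ring

lemma matVec_cont : Continuous fun q : (Fin I → Fin J → ℂ) × EuclideanSpace ℂ (Fin J) =>
    matVec q.1 q.2 := by
  unfold matVec
  refine (PiLp.continuous_toLp 2 (fun _ : Fin I => ℂ)).comp ?_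
  refine continuous_pi fun i => continuous_finset_sum _ fun j _ => Continuous.mul ?_ ?_
  · exact (continuous_apply j).comp ((continuous_apply i).comp continuous_fst)
  · exact (continuous_apply j).comp ((PiLp.continuous_ofLp 2 (fun _ : Fin J => ℂ)).comp continuous_snd)

lemma sl_apply_cont :
    Continuous fun p : (EuclideanSpace ℂ (Fin J) →SL[starRingEnd ℂ] ℂ) ×
      EuclideanSpace ℂ (Fin J) => p.1 p.2 := by
  rw [continuous_iff_continuousAt]
  rintro ⟨B₀, w₀⟩
  rw [ContinuousAt, tendsto_iff_norm_sub_tendsto_zero]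
  have hb : ∀ p : (EuclideanSpace ℂ (Fin J) →SL[starRingEnd ℂ] ℂ) × EuclideanSpace ℂ (Fin J),
      ‖p.1 p.2 - B₀ w₀‖ ≤ ‖p.1 - B₀‖ * ‖p.2 - w₀‖ + ‖p.1 - B₀‖ * ‖w₀‖ + ‖B₀‖ * ‖p.2 - w₀‖ := by
    rintro ⟨B, w⟩
    have h : B w - B₀ w₀ = (B - B₀) (w - w₀) + (B - B₀) w₀ + B₀ (w - w₀) := by
      simp only [ContinuousLinearMap.sub_apply, map_sub]; ring
    rw [h]
    have h1 : ‖(B - B₀) (w - w₀)‖ ≤ ‖B - B₀‖ * ‖w - w₀‖ := ContinuousLinearMap.le_opNorm _ _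
    have h2 : ‖(B - B₀) w₀‖ ≤ ‖B - B₀‖ * ‖w₀‖ := ContinuousLinearMap.le_opNorm _ _
    have h3 : ‖B₀ (w - w₀)‖ ≤ ‖B₀‖ * ‖w - w₀‖ := ContinuousLinearMap.le_opNorm _ _
    calc ‖(B - B₀) (w - w₀) + (B - B₀) w₀ + B₀ (w - w₀)‖
        ≤ ‖(B - B₀) (w - w₀) + (B - B₀) w₀‖ + ‖B₀ (w - w₀)‖ := norm_add_le _ _
      _ ≤ ‖(B - B₀) (w - w₀)‖ + ‖(B - B₀) w₀‖ + ‖B₀ (w - w₀)‖ := by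
          have := norm_add_le ((B - B₀) (w - w₀)) ((B - B₀) w₀); linarith
      _ ≤ ‖B - B₀‖ * ‖w - w₀‖ + ‖B - B₀‖ * ‖w₀‖ + ‖B₀‖ * ‖w - w₀‖ := by linarith
  have hcont : Filter.Tendsto (fun p : (EuclideanSpace ℂ (Fin J) →SL[starRingEnd ℂ] ℂ) ×
      EuclideanSpace ℂ (Fin J) => ‖p.1 - B₀‖ * ‖p.2 - w₀‖ + ‖p.1 - B₀‖ * ‖w₀‖ + ‖B₀‖ * ‖p.2 - w₀‖)
      (nhds (B₀, w₀)) (nhds 0) := by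
    have : Continuous fun p : (EuclideanSpace ℂ (Fin J) →SL[starRingEnd ℂ] ℂ) ×
        EuclideanSpace ℂ (Fin J) => ‖p.1 - B₀‖ * ‖p.2 - w₀‖ + ‖p.1 - B₀‖ * ‖w₀‖ + ‖B₀‖ * ‖p.2 - w₀‖ := by
      fun_prop
    have h0 := this.tendsto (B₀, w₀)
    simpa using h0
  exact squeeze_zero (fun p => norm_nonneg _) hb hcont

set_option maxHeartbeats 4000000 in
/-- **Quadratic inequality for homogeneous symbols (Euclidean form of the key lemma).**
Let `K₀ ⊆ ℝⁿ` be nonempty compact, `σ : K₀ × (ℝⁿ∖{0}) → ℂ^{I×J}` continuous and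
positively homogeneous of degree `s > 0` in `ξ`, and let `Q : K₀ → (sesquilinear forms
on ℂᴶ)` be continuous with `Re Q_x(v,v) ≥ 0` for all `x ∈ K₀` and all
`v ∈ Λ(x) = {v : σ(x,ξ)v = 0 for some ξ ≠ 0}`. Then for every `δ > 0` there is `C > 0`
such that for all `x ∈ K₀`, `|ξ| ≥ 1` and `v ∈ ℂᴶ`:
`Re Q_x(v,v) ≥ -δ|v|² - C (1+|ξ|²)^{-s} |σ(x,ξ)v|²`. -/
theorem quadratic_inequality_homogeneous_symbol
    (s : ℝ) (hs : 0 < s)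
    (K₀ : Set (EuclideanSpace ℝ (Fin n))) (hK₀ : IsCompact K₀) (hK₀ne : K₀.Nonempty)
    (σ : EuclideanSpace ℝ (Fin n) → EuclideanSpace ℝ (Fin n) → Fin I → Fin J → ℂ)
    (hσcont : ContinuousOn (fun p : EuclideanSpace ℝ (Fin n) × EuclideanSpace ℝ (Fin n) =>
      σ p.1 p.2) (K₀ ×ˢ {ξ | ξ ≠ 0}))
    (hσhom : ∀ x ∈ K₀, ∀ t : ℝ, 0 < t → ∀ ξ : EuclideanSpace ℝ (Fin n), ξ ≠ 0 →
      ∀ i j, σ x (t • ξ) i j = ((t ^ s : ℝ) : ℂ) * σ x ξ i j)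
    (Q : EuclideanSpace ℝ (Fin n) → (EuclideanSpace ℂ (Fin J) →L[ℂ]
      (EuclideanSpace ℂ (Fin J) →SL[starRingEnd ℂ] ℂ)))
    (hQcont : ContinuousOn Q K₀)
    (hQpos : ∀ x ∈ K₀, ∀ v : EuclideanSpace ℂ (Fin J),
      (∃ ξ : EuclideanSpace ℝ (Fin n), ξ ≠ 0 ∧ matVec (σ x ξ) v = 0) → 0 ≤ (Q x v v).re) :
    ∀ δ : ℝ, 0 < δ → ∃ C : ℝ, 0 < C ∧
      ∀ x ∈ K₀, ∀ ξ : EuclideanSpace ℝ (Fin n), 1 ≤ ‖ξ‖ →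
        ∀ v : EuclideanSpace ℂ (Fin J),
          -δ * ‖v‖ ^ 2 - C * ((1 + ‖ξ‖ ^ 2) ^ (-s)) * ‖matVec (σ x ξ) v‖ ^ 2
            ≤ (Q x v v).re := by
  intro δ hδ
  classical
  set f : EuclideanSpace ℝ (Fin n) × (EuclideanSpace ℝ (Fin n) × EuclideanSpace ℂ (Fin J)) → ℝ :=
    fun p => (Q p.1 p.2.2 p.2.2).re with hfdef
  set g : EuclideanSpace ℝ (Fin n) × (EuclideanSpace ℝ (Fin n) × EuclideanSpace ℂ (Fin J)) → ℝ :=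
    fun p => ‖matVec (σ p.1 p.2.1) p.2.2‖ ^ 2 with hgdef
  set T : Set (EuclideanSpace ℝ (Fin n) × (EuclideanSpace ℝ (Fin n) × EuclideanSpace ℂ (Fin J))) :=
    K₀ ×ˢ (Metric.sphere (0 : EuclideanSpace ℝ (Fin n)) 1 ×ˢ
      Metric.sphere (0 : EuclideanSpace ℂ (Fin J)) 1) with hTdef
  have hTcomp : IsCompact T :=
    hK₀.prod ((isCompact_sphere 0 1).prod (isCompact_sphere 0 1))
  -- continuity of f on T
  have hf : ContinuousOn f T := by
    have h1 : ContinuousOn (fun p :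
        EuclideanSpace ℝ (Fin n) × (EuclideanSpace ℝ (Fin n) × EuclideanSpace ℂ (Fin J)) =>
        Q p.1) T :=
      hQcont.comp continuous_fst.continuousOn (fun p hp => hp.1)
    have h2 : ContinuousOn (fun p :
        EuclideanSpace ℝ (Fin n) × (EuclideanSpace ℝ (Fin n) × EuclideanSpace ℂ (Fin J)) =>
        Q p.1 p.2.2) T :=
      h1.clm_apply (continuous_snd.snd.continuousOn)
    have h3 : ContinuousOn (fun p :
        EuclideanSpace ℝ (Fin n) × (EuclideanSpace ℝ (Fin n) × EuclideanSpace ℂ (Fin J)) =>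
        Q p.1 p.2.2 p.2.2) T :=
      sl_apply_cont.comp_continuousOn (h2.prodMk (continuous_snd.snd.continuousOn))
    exact Complex.continuous_re.comp_continuousOn h3
  -- continuity of g on T
  have hg : ContinuousOn g T := by
    have h1 : ContinuousOn (fun p :
        EuclideanSpace ℝ (Fin n) × (EuclideanSpace ℝ (Fin n) × EuclideanSpace ℂ (Fin J)) =>
        σ p.1 p.2.1) T := by
      refine hσcont.comp (continuous_fst.prodMk continuous_snd.fst).continuousOn ?_
      rintro ⟨x, ξ, v⟩ ⟨hx, hξ, -⟩
      refine ⟨hx, ?_⟩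
      have hn : ‖ξ‖ = 1 := by simpa using mem_sphere_zero_iff_norm.1 hξ
      change ξ ≠ 0
      intro h0
      rw [h0] at hn
      simp at hn
    have h2 : ContinuousOn (fun p :
        EuclideanSpace ℝ (Fin n) × (EuclideanSpace ℝ (Fin n) × EuclideanSpace ℂ (Fin J)) =>
        matVec (σ p.1 p.2.1) p.2.2) T :=
      matVec_cont.comp_continuousOn (h1.prodMk (continuous_snd.snd.continuousOn))
    exact (h2.norm).pow 2
  -- the bad set
  set T' := T ∩ f ⁻¹' Set.Iic (-δ) with hT'def
  have hT'comp : IsCompact T' := by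
    refine hTcomp.of_isClosed_subset ?_ Set.inter_subset_left
    exact hf.preimage_isClosed_of_isClosed hTcomp.isClosed isClosed_Iic
  -- g is positive on T'
  have hgpos : ∀ p ∈ T', 0 < g p := by
    rintro p ⟨hpT, hpf⟩
    have hgnn : 0 ≤ g p := by positivity
    rcases eq_or_lt_of_le hgnn with h0 | h; swap
    · exact h
    exfalso
    have hz : matVec (σ p.1 p.2.1) p.2.2 = 0 := by
      have := h0.symm
      rw [hgdef] at this
      simpa [pow_eq_zero_iff] using this
    have hξne : p.2.1 ≠ 0 := by
      have : ‖p.2.1‖ = 1 := by simpa using mem_sphere_zero_iff_norm.1 hpT.2.1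
      intro h0'; simp [h0'] at this
    have := hQpos p.1 hpT.1 p.2.2 ⟨p.2.1, hξne, hz⟩
    have hle : f p ≤ -δ := hpf
    rw [hfdef] at hle
    simp only at hle this
    linarith
  -- unit-sphere claim
  obtain ⟨C₀, hC₀pos, hC₀⟩ : ∃ C₀ : ℝ, 0 < C₀ ∧ ∀ p ∈ T, -δ - C₀ * g p ≤ f p := by
    rcases Set.eq_empty_or_nonempty T' with hTe | hTne
    · refine ⟨1, one_pos, fun p hp => ?_⟩
      have : p ∉ T' := by rw [hTe]; exact Set.notMem_empty p
      have hfp : ¬ f p ≤ -δ := fun h => this ⟨hp, h⟩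
      have hgnn : 0 ≤ g p := by rw [hgdef]; positivity
      push_neg at hfp
      nlinarith
    · obtain ⟨p₁, hp₁, hp₁min⟩ := hT'comp.exists_isMinOn hTne (hg.mono Set.inter_subset_left)
      obtain ⟨p₀, hp₀, hp₀min⟩ := hT'comp.exists_isMinOn hTne (hf.mono Set.inter_subset_left)
      set ε := g p₁ with hεdef
      have hεpos : 0 < ε := hgpos p₁ hp₁
      set M := -(f p₀) with hMdef
      refine ⟨max 1 (M / ε), lt_of_lt_of_le one_pos (le_max_left _ _), fun p hp => ?_⟩
      by_cases hfp : f p ≤ -δ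
      · have hpT' : p ∈ T' := ⟨hp, hfp⟩
        have hge : ε ≤ g p := hp₁min hpT'
        have hfm : f p₀ ≤ f p := hp₀min hpT'
        have h1 : M / ε * ε ≤ max 1 (M / ε) * g p := by
          have := le_max_right 1 (M / ε)
          have hgp : 0 < g p := lt_of_lt_of_le hεpos hge
          nlinarith [lt_of_lt_of_le one_pos (le_max_left 1 (M/ε))]
        have h2 : M / ε * ε = M := div_mul_cancel₀ M hεpos.ne'
        rw [h2] at h1
        have hM : -f p ≤ M := by rw [hMdef]; linarith
        linarith
      · push_neg at hfp
        have hgnn : 0 ≤ g p := by rw [hgdef]; positivity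
        nlinarith [lt_of_lt_of_le one_pos (le_max_left 1 (M/ε))]
  -- conclude with scaling
  refine ⟨(2 : ℝ) ^ s * C₀, by positivity, ?_⟩
  intro x hx ξ hξ1 v
  by_cases hv0 : v = 0
  · simp only [hv0, norm_zero]
    have hmz : matVec (σ x ξ) (0 : EuclideanSpace ℂ (Fin J)) = 0 := by
      have := matVec_smul (σ x ξ) 0 (0 : EuclideanSpace ℂ (Fin J))
      simpa using this
    rw [hmz]
    simp
  · set t := ‖ξ‖ with htdef
    have ht0 : (0 : ℝ) < t := lt_of_lt_of_le one_pos hξ1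
    have hξ0 : ξ ≠ 0 := by
      intro h
      have ht00 : t = 0 := by rw [htdef, h, norm_zero]
      rw [ht00] at ht0
      exact lt_irrefl 0 ht0
    set η : EuclideanSpace ℝ (Fin n) := t⁻¹ • ξ with hηdef
    have hη1 : ‖η‖ = 1 := by
      rw [hηdef, norm_smul, norm_inv, Real.norm_eq_abs, abs_of_pos ht0]
      exact inv_mul_cancel₀ ht0.ne'
    have hηne : η ≠ 0 := by intro h; rw [h] at hη1; simp at hη1
    have hξeq : ξ = t • η := by rw [hηdef, smul_smul, mul_inv_cancel₀ ht0.ne', one_smul]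
    set c : ℂ := (‖v‖ : ℂ) with hcdef
    have hvn0 : (0:ℝ) < ‖v‖ := norm_pos_iff.2 hv0
    set w : EuclideanSpace ℂ (Fin J) := (‖v‖ : ℂ)⁻¹ • v with hwdef
    have hw1 : ‖w‖ = 1 := by
      rw [hwdef, norm_smul]
      simp [norm_inv, inv_mul_cancel₀ hvn0.ne']
    have hveq : v = c • w := by
      rw [hwdef, hcdef, smul_smul, mul_inv_cancel₀ (by exact_mod_cast hvn0.ne' : (‖v‖:ℂ) ≠ 0),
        one_smul]
    -- claim at unit scale
    have hkey : -δ - C₀ * ‖matVec (σ x η) w‖ ^ 2 ≤ (Q x w w).re := by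
      have hpT : (x, η, w) ∈ T := by
        refine ⟨hx, ?_, ?_⟩ <;> simp [mem_sphere_zero_iff_norm, hη1, hw1]
      have hkey0 := hC₀ (x, η, w) hpT
      simp only [hfdef, hgdef] at hkey0
      exact hkey0
    -- Q scaling
    have hQsc : (Q x v v).re = ‖v‖ ^ 2 * (Q x w w).re := by
      have e1 : Q x (c • w) = c • Q x w := map_smul (Q x) c w
      have e2 : (Q x w) (c • w) = (starRingEnd ℂ) c * (Q x w w) := by
        rw [ContinuousLinearMap.map_smulₛₗ, smul_eq_mul]
      have : Q x v v = ((‖v‖ ^ 2 : ℝ) : ℂ) * Q x w w := by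
        calc Q x v v = (c • Q x w) (c • w) := by rw [hveq, e1]
          _ = c * ((Q x w) (c • w)) := by rw [ContinuousLinearMap.smul_apply, smul_eq_mul]
          _ = c * ((starRingEnd ℂ) c * (Q x w w)) := by rw [e2]
          _ = ((‖v‖ ^ 2 : ℝ) : ℂ) * Q x w w := by
              rw [hcdef, Complex.conj_ofReal]
              push_cast
              ring
      rw [this, Complex.re_ofReal_mul]
    -- matVec scaling
    have hσeq : σ x ξ = fun i j => ((t ^ s : ℝ) : ℂ) * σ x η i j := by
      funext i j
      conv_lhs => rw [hξeq]
      exact hσhom x hx t ht0 η hηne i j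
    have hmv : matVec (σ x ξ) v = ((t ^ s : ℝ) : ℂ) • (c • matVec (σ x η) w) := by
      rw [hσeq, matVec_entries_smul]
      congr 1
      rw [hveq, matVec_smul]
    have hts : (0:ℝ) < t ^ s := Real.rpow_pos_of_pos ht0 s
    have hNorm : ‖matVec (σ x ξ) v‖ ^ 2 = (t ^ s) ^ 2 * (‖v‖ ^ 2 * ‖matVec (σ x η) w‖ ^ 2) := by
      rw [hmv, norm_smul, norm_smul, hcdef, Complex.norm_real, Complex.norm_real,
        Real.norm_eq_abs, Real.norm_eq_abs, abs_of_pos hts, abs_of_pos hvn0]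
      ring
    -- comparison of scaling factors
    have h1t : (0:ℝ) < 1 + t ^ 2 := by positivity
    have hfac : C₀ ≤ (2:ℝ) ^ s * C₀ * (1 + t ^ 2) ^ (-s) * (t ^ s) ^ 2 := by
      have h2t : 1 + t ^ 2 ≤ 2 * t ^ 2 := by nlinarith
      have hpow : (1 + t ^ 2) ^ s ≤ 2 ^ s * (t ^ s) ^ 2 := by
        calc (1 + t ^ 2) ^ s ≤ (2 * t ^ 2) ^ s := Real.rpow_le_rpow h1t.le h2t hs.le
          _ = 2 ^ s * (t ^ 2) ^ s := Real.mul_rpow (by norm_num) (by positivity)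
          _ = 2 ^ s * (t ^ s) ^ 2 := by
              congr 1
              rw [← Real.rpow_natCast t 2, ← Real.rpow_mul ht0.le, mul_comm,
                Real.rpow_mul ht0.le, Real.rpow_natCast]
      have hpos : (0:ℝ) < (1 + t ^ 2) ^ s := Real.rpow_pos_of_pos h1t s
      have h1le : (1:ℝ) ≤ (2 ^ s * (t ^ s) ^ 2) / ((1 + t ^ 2) ^ s) := (one_le_div hpos).2 hpow
      rw [Real.rpow_neg h1t.le]
      calc C₀ = C₀ * 1 := (mul_one C₀).symm
        _ ≤ C₀ * ((2 ^ s * (t ^ s) ^ 2) / ((1 + t ^ 2) ^ s)) :=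
            mul_le_mul_of_nonneg_left h1le hC₀pos.le
        _ = 2 ^ s * C₀ * ((1 + t ^ 2) ^ s)⁻¹ * (t ^ s) ^ 2 := by
            rw [div_eq_mul_inv]; ring
    rw [hQsc, hNorm]
    have hG : (0:ℝ) ≤ ‖matVec (σ x η) w‖ ^ 2 := sq_nonneg _
    have hv2 : (0:ℝ) ≤ ‖v‖ ^ 2 := sq_nonneg _
    have h1 : ‖v‖ ^ 2 * (-δ - C₀ * ‖matVec (σ x η) w‖ ^ 2) ≤ ‖v‖ ^ 2 * (Q x w w).re :=
      mul_le_mul_of_nonneg_left hkey hv2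
    have h2 : C₀ * (‖v‖ ^ 2 * ‖matVec (σ x η) w‖ ^ 2) ≤
        ((2:ℝ) ^ s * C₀ * (1 + t ^ 2) ^ (-s) * (t ^ s) ^ 2) * (‖v‖ ^ 2 * ‖matVec (σ x η) w‖ ^ 2) :=
      mul_le_mul_of_nonneg_right hfac (mul_nonneg hv2 hG)
    have habs : ∀ a G R D P : ℝ, 0 ≤ a → 0 ≤ G → a * (-δ - C₀ * G) ≤ a * R →
        C₀ * (a * G) ≤ (2:ℝ) ^ s * C₀ * D * P * (a * G) →
        -δ * a - (2:ℝ) ^ s * C₀ * D * (P * (a * G)) ≤ a * R := by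
      intro a G R D P ha hG h1 h2
      nlinarith
    exact habs (‖v‖ ^ 2) (‖matVec (σ x η) w‖ ^ 2) ((Q x w w).re) ((1 + t ^ 2) ^ (-s))
      ((t ^ s) ^ 2) hv2 hG h1 h2
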